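/- If trees T and U over alphabet {1,…,m} have tree edit distance at most d (with unit-cost substitution, deletion, and insertion of vertices), then the string edit distance between their Euler strings E(T) and E(U) is at most 2d. -/
import Mathlib


inductive LTree : Type
  | node : ℕ → List LTree → LTree

namespace LTree

/-- Euler string of a forest (ordered list of labeled subtrees). -/
def eulerF (m : ℕ) : List LTree → List ℕ
  | [] => []
  | node b cs :: rest => b :: (eulerF m cs ++ (b + m) :: eulerF m rest)

/-- Euler string of a single tree viewed as a forest element. -/
def eulerT (m : ℕ) (t : LTree) : List ℕ := eulerF m [t]

/-- Labels of all vertices of a forest. -/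
def labelsF : List LTree → List ℕ
  | [] => []
  | node b cs :: rest => b :: (labelsF cs ++ labelsF rest)

/-- All labels lie in `{1, …, m}`. -/
def WFforest (m : ℕ) (f : List LTree) : Prop := ∀ b ∈ labelsF f, 1 ≤ b ∧ b ≤ m

/-- Number of vertices of a forest (= number of non-root vertices of the tree). -/
def countF : List LTree → ℕ
  | [] => 0
  | node _ cs :: rest => 1 + countF cs + countF rest

/-- Matched pairs of (1-indexed) inward/outward positions in the Euler string,
together with the vertex contributing them, for a forest whose Euler string
starts at offset `o`. -/
def pairsV (m : ℕ) : List LTree → ℕ → List (LTree × ℕ × ℕ)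
  | [], _ => []
  | node b cs :: rest, o =>
      (node b cs, o + 1, o + (eulerF m cs).length + 2) ::
        (pairsV m cs (o + 1) ++ pairsV m rest (o + (eulerF m cs).length + 2))

/-- Matched pairs of (1-indexed) inward/outward positions. -/
def pairsF (m : ℕ) (f : List LTree) (o : ℕ) : List (ℕ × ℕ) :=
  (pairsV m f o).map Prod.snd

/-- Number of inward symbols (≤ m) strictly between 1-indexed positions ℓ and i. -/
def inBetween (m : ℕ) (s : List ℕ) (ℓ i : ℕ) : ℕ :=
  ((s.drop ℓ).take (i - ℓ - 1)).countP (fun t => decide (t ≤ m))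

/-- Number of outward symbols (> m) strictly between 1-indexed positions ℓ and i. -/
def outBetween (m : ℕ) (s : List ℕ) (ℓ i : ℕ) : ℕ :=
  ((s.drop ℓ).take (i - ℓ - 1)).countP (fun t => decide (m < t))

end LTree


namespace LTree

/-- Relabeling of a single vertex. -/
inductive Relabel : List LTree → List LTree → Prop
  | here {b c : ℕ} {cs rest : List LTree} :
      Relabel (node b cs :: rest) (node c cs :: rest)
  | child {b : ℕ} {cs cs' rest : List LTree} :
      Relabel cs cs' → Relabel (node b cs :: rest) (node b cs' :: rest)
  | tail {t : LTree} {rest rest' : List LTree} :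
      Relabel rest rest' → Relabel (t :: rest) (t :: rest')

/-- Deletion of a single (non-root) vertex: its children take its place, in order. -/
inductive DeleteV : List LTree → List LTree → Prop
  | here {b : ℕ} {cs rest : List LTree} : DeleteV (node b cs :: rest) (cs ++ rest)
  | child {b : ℕ} {cs cs' rest : List LTree} :
      DeleteV cs cs' → DeleteV (node b cs :: rest) (node b cs' :: rest)
  | tail {t : LTree} {rest rest' : List LTree} :
      DeleteV rest rest' → DeleteV (t :: rest) (t :: rest')

/-- One tree edit operation: substitution, deletion, or insertion (inverse of deletion). -/
def TreeStep (s t : List LTree) : Prop := Relabel s t ∨ DeleteV s t ∨ DeleteV t s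

/-- Tree edit distance at most `d`. -/
def TreeEditLe : ℕ → List LTree → List LTree → Prop
  | 0, s, t => s = t
  | d + 1, s, t => s = t ∨ ∃ u, TreeStep s u ∧ TreeEditLe d u t

end LTree

/-- One string edit operation: substitution, deletion, or insertion of a symbol. -/
inductive EditStep : List ℕ → List ℕ → Prop
  | subst (u w : List ℕ) (a b : ℕ) : EditStep (u ++ a :: w) (u ++ b :: w)
  | delete (u w : List ℕ) (a : ℕ) : EditStep (u ++ a :: w) (u ++ w)
  | insert (u w : List ℕ) (a : ℕ) : EditStep (u ++ w) (u ++ a :: w)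

/-- String edit distance at most `d`. -/
def EditLe : ℕ → List ℕ → List ℕ → Prop
  | 0, s, t => s = t
  | d + 1, s, t => s = t ∨ ∃ u, EditStep s u ∧ EditLe d u t

namespace LTree

theorem eulerF_append (m : ℕ) (f g : List LTree) :
    eulerF m (f ++ g) = eulerF m f ++ eulerF m g := by
  induction f with
  | nil => simp [eulerF]
  | cons t rest ih =>
    cases t with
    | node b cs => simp [eulerF, ih]

end LTree

theorem EditLe_refl : ∀ d s, EditLe d s s
  | 0, _ => rfl
  | _ + 1, _ => Or.inl rfl

theorem EditLe_succ {d : ℕ} {s t : List ℕ} (h : EditLe d s t) : EditLe (d + 1) s t := by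
  induction d generalizing s with
  | zero => exact Or.inl h
  | succ d ih =>
    rcases h with h | ⟨u, hs, hle⟩
    · exact Or.inl h
    · exact Or.inr ⟨u, hs, ih hle⟩

theorem EditLe_add_left {d : ℕ} (k : ℕ) {s t : List ℕ} (h : EditLe d s t) :
    EditLe (k + d) s t := by
  induction k with
  | zero => simpa using h
  | succ k ih => exact (Nat.succ_add k d ▸ EditLe_succ ih)

theorem EditLe_trans : ∀ (d1 : ℕ) {d2 : ℕ} {s t u : List ℕ},
    EditLe d1 s t → EditLe d2 t u → EditLe (d1 + d2) s u := by
  intro d1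
  induction d1 with
  | zero =>
    intro d2 s t u h1 h2
    cases h1
    simpa using h2
  | succ d ih =>
    intro d2 s t u h1 h2
    rcases h1 with h1 | ⟨v, hs, hle⟩
    · cases h1
      exact EditLe_add_left (d + 1) h2
    · have h3 : EditLe (d + d2) v u := ih hle h2
      rw [Nat.add_right_comm]
      exact Or.inr ⟨v, hs, h3⟩

theorem EditStep_context (p q : List ℕ) {s t : List ℕ} (h : EditStep s t) :
    EditStep (p ++ s ++ q) (p ++ t ++ q) := by
  cases h with
  | subst u w a b => simpa using EditStep.subst (p ++ u) (w ++ q) a b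
  | delete u w a => simpa using EditStep.delete (p ++ u) (w ++ q) a
  | insert u w a => simpa using EditStep.insert (p ++ u) (w ++ q) a

theorem EditLe_context (p q : List ℕ) : ∀ (d : ℕ) {s t : List ℕ},
    EditLe d s t → EditLe d (p ++ s ++ q) (p ++ t ++ q) := by
  intro d
  induction d with
  | zero => intro s t h; cases h; rfl
  | succ d ih =>
    intro s t h
    rcases h with h | ⟨u, hs, hle⟩
    · cases h; exact Or.inl rfl
    · exact Or.inr ⟨p ++ u ++ q, EditStep_context p q hs, ih hle⟩

theorem EditStep_symm {s t : List ℕ} (h : EditStep s t) : EditStep t s := by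
  cases h with
  | subst u w a b => exact .subst u w b a
  | delete u w a => exact .insert u w a
  | insert u w a => exact .delete u w a

theorem EditLe_snoc : ∀ (d : ℕ) {s t u : List ℕ},
    EditLe d s t → EditStep t u → EditLe (d + 1) s u := by
  intro d
  induction d with
  | zero => intro s t u h hs; cases h; exact Or.inr ⟨u, hs, rfl⟩
  | succ d ih =>
    intro s t u h hs
    rcases h with h | ⟨v, hv, hle⟩
    · cases h; exact Or.inr ⟨u, hs, EditLe_refl _ _⟩
    · exact Or.inr ⟨v, hv, ih hle hs⟩

theorem EditLe_symm : ∀ (d : ℕ) {s t : List ℕ}, EditLe d s t → EditLe d t s := by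
  intro d
  induction d with
  | zero => intro s t h; exact h.symm
  | succ d ih =>
    intro s t h
    rcases h with h | ⟨u, hs, hle⟩
    · exact Or.inl h.symm
    · exact EditLe_snoc d (ih hle) (EditStep_symm hs)

open LTree in
theorem relabel_edit (m : ℕ) {f g : List LTree} (h : LTree.Relabel f g) :
    EditLe 2 (LTree.eulerF m f) (LTree.eulerF m g) := by
  induction h with
  | @here b c cs rest =>
    refine Or.inr ⟨c :: (eulerF m cs ++ (b + m) :: eulerF m rest), ?_, ?_⟩
    · simpa [eulerF] using EditStep.subst [] (eulerF m cs ++ (b + m) :: eulerF m rest) b c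
    · refine Or.inr ⟨_, ?_, (rfl : EditLe 0 _ _)⟩
      simpa [eulerF] using EditStep.subst (c :: eulerF m cs) (eulerF m rest) (b + m) (c + m)
  | @child b cs cs' rest _ ih =>
    have := EditLe_context [b] ((b + m) :: eulerF m rest) 2 ih
    simpa [eulerF] using this
  | @tail t rest rest' _ ih =>
    obtain ⟨b, cs⟩ := t
    have := EditLe_context (b :: (eulerF m cs ++ [b + m])) [] 2 ih
    simpa [eulerF] using this

open LTree in
theorem delete_edit (m : ℕ) {f g : List LTree} (h : LTree.DeleteV f g) :
    EditLe 2 (LTree.eulerF m f) (LTree.eulerF m g) := by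
  induction h with
  | @here b cs rest =>
    refine Or.inr ⟨eulerF m cs ++ (b + m) :: eulerF m rest, ?_, ?_⟩
    · simpa [eulerF] using EditStep.delete [] (eulerF m cs ++ (b + m) :: eulerF m rest) b
    · refine Or.inr ⟨eulerF m cs ++ eulerF m rest, ?_, ?_⟩
      · simpa using EditStep.delete (eulerF m cs) (eulerF m rest) (b + m)
      · show eulerF m cs ++ eulerF m rest = eulerF m (cs ++ rest)
        rw [eulerF_append]
  | @child b cs cs' rest _ ih =>
    have := EditLe_context [b] ((b + m) :: eulerF m rest) 2 ih
    simpa [eulerF] using this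
  | @tail t rest rest' _ ih =>
    obtain ⟨b, cs⟩ := t
    have := EditLe_context (b :: (eulerF m cs ++ [b + m])) [] 2 ih
    simpa [eulerF] using this

theorem treeStep_edit (m : ℕ) {f g : List LTree} (h : LTree.TreeStep f g) :
    EditLe 2 (LTree.eulerF m f) (LTree.eulerF m g) := by
  rcases h with h | h | h
  · exact relabel_edit m h
  · exact delete_edit m h
  · exact EditLe_symm 2 (delete_edit m h)

theorem tree_edit_to_string_edit (m d : ℕ) (hm : 1 ≤ m) (f g : List LTree)
    (hf : LTree.WFforest m f) (hg : LTree.WFforest m g) (h : LTree.TreeEditLe d f g) :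
    EditLe (2 * d) (LTree.eulerF m f) (LTree.eulerF m g) := by
  clear hm hf hg
  induction d generalizing f with
  | zero => cases h; rfl
  | succ d ih =>
    rcases h with h | ⟨u, hs, hle⟩
    · cases h; exact EditLe_refl _ _
    · have h2 : EditLe (2 + 2 * d) (LTree.eulerF m f) (LTree.eulerF m g) :=
        EditLe_trans 2 (treeStep_edit m hs) (ih u hle)
      have : 2 * (d + 1) = 2 + 2 * d := by ring
      rw [this]
      exact h2
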